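/- Let d ≥ 1 and let η : ℝ → ℝ^d, m : ℝ → ℝ, σ : ℝ → ℝ be differentiable with m(t) > 0 and σ(t) > 0 for all t. Define the conditional Gaussian measure path ρ(t, x) = m(t)·(2π σ(t)²)^{−d/2}·exp(−‖x − η(t)‖²/(2σ(t)²)), the conditional velocity field u(t, x) = (σ′(t)/σ(t))·(x − η(t)) + η′(t), and the growth rate g(t) = m′(t)/m(t). Then ρ satisfies the continuity equation with source pointwise: for every t ∈ ℝ and x ∈ ℝ^d, ∂ρ/∂t (t, x) + div_x( ρ(t, ·) u(t, ·) )(x) = ρ(t, x)·g(t), where div_x F = Σ_{k=1}^d ∂F_k/∂x_k denotes the spatial divergence. -/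

import Mathlib

open scoped BigOperators

/-- Spatial divergence of a vector field on `ℝ^d`:
the sum of the partial derivatives of its components. -/
noncomputable def spatialDiv {d : ℕ}
    (F : EuclideanSpace ℝ (Fin d) → EuclideanSpace ℝ (Fin d))
    (x : EuclideanSpace ℝ (Fin d)) : ℝ :=
  ∑ k, fderiv ℝ F x (EuclideanSpace.single k (1 : ℝ)) k

open scoped InnerProductSpace

set_option maxHeartbeats 1000000 in
theorem gaussian_path_continuity_equation_with_source
    {d : ℕ} (hd : 1 ≤ d)
    (η : ℝ → EuclideanSpace ℝ (Fin d)) (m σ : ℝ → ℝ)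
    (hη : Differentiable ℝ η) (hm : Differentiable ℝ m) (hσ : Differentiable ℝ σ)
    (hmpos : ∀ t, 0 < m t) (hσpos : ∀ t, 0 < σ t)
    (ρ : ℝ → EuclideanSpace ℝ (Fin d) → ℝ)
    (hρ : ∀ t x, ρ t x
      = m t * (2 * Real.pi * σ t ^ 2) ^ (-(d : ℝ) / 2)
          * Real.exp (-‖x - η t‖ ^ 2 / (2 * σ t ^ 2)))
    (u : ℝ → EuclideanSpace ℝ (Fin d) → EuclideanSpace ℝ (Fin d))
    (hu : ∀ t x, u t x = (deriv σ t / σ t) • (x - η t) + deriv η t)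
    (g : ℝ → ℝ) (hg : ∀ t, g t = deriv m t / m t) :
    ∀ (t : ℝ) (x : EuclideanSpace ℝ (Fin d)),
      deriv (fun s => ρ s x) t + spatialDiv (fun y => ρ t y • u t y) x
        = ρ t x * g t := by
  intro t x
  classical
  have hσt : (0:ℝ) < σ t := hσpos t
  have hσne : σ t ≠ 0 := hσt.ne'
  have hmne : m t ≠ 0 := (hmpos t).ne'
  have hπ : (0:ℝ) < Real.pi := Real.pi_pos
  have hBpos : (0:ℝ) < 2 * Real.pi * σ t ^ 2 := by positivity
  set p : ℝ := -(d : ℝ) / 2 with hpdef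
  set σ' := deriv σ t with hσ'def
  set m' := deriv m t with hm'def
  set η' := deriv η t with hη'def
  set v : EuclideanSpace ℝ (Fin d) := x - η t with hvdef
  -- time derivative
  have hηd : HasDerivAt η η' t := (hη t).hasDerivAt
  have hσd : HasDerivAt σ σ' t := (hσ t).hasDerivAt
  have hmd : HasDerivAt m m' t := (hm t).hasDerivAt
  have hBd : HasDerivAt (fun s => 2 * Real.pi * σ s ^ 2)
      (2 * Real.pi * (2 * σ t ^ 1 * σ')) t :=
    (hσd.pow 2).const_mul (2 * Real.pi)
  have hBpd : HasDerivAt (fun s => (2 * Real.pi * σ s ^ 2) ^ p)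
      (p * (2 * Real.pi * σ t ^ 2) ^ (p - 1) * (2 * Real.pi * (2 * σ t ^ 1 * σ'))) t := by
    have := (Real.hasDerivAt_rpow_const (p := p) (Or.inl hBpos.ne')).comp t hBd
    exact this
  have hNd : HasDerivAt (fun s => m s * (2 * Real.pi * σ s ^ 2) ^ p)
      (m' * (2 * Real.pi * σ t ^ 2) ^ p
        + m t * (p * (2 * Real.pi * σ t ^ 2) ^ (p - 1)
            * (2 * Real.pi * (2 * σ t ^ 1 * σ')))) t :=
    hmd.mul hBpd
  have hvd : HasDerivAt (fun s => x - η s) (-η') t := hηd.const_sub x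
  have hnd : HasDerivAt (fun s => ⟪x - η s, x - η s⟫_ℝ) (⟪v, -η'⟫_ℝ + ⟪-η', v⟫_ℝ) t :=
    hvd.inner ℝ hvd
  have hDend : HasDerivAt (fun s => 2 * σ s ^ 2) (2 * (2 * σ t ^ 1 * σ')) t :=
    (hσd.pow 2).const_mul 2
  have hqd : HasDerivAt (fun s => -⟪x - η s, x - η s⟫_ℝ / (2 * σ s ^ 2))
      ((-(⟪v, -η'⟫_ℝ + ⟪-η', v⟫_ℝ) * (2 * σ t ^ 2)
          - -⟪v, v⟫_ℝ * (2 * (2 * σ t ^ 1 * σ'))) / (2 * σ t ^ 2) ^ 2) t :=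
    hnd.neg.div hDend (by positivity)
  have hfun : (fun s => ρ s x) = fun s => m s * (2 * Real.pi * σ s ^ 2) ^ p *
      Real.exp (-⟪x - η s, x - η s⟫_ℝ / (2 * σ s ^ 2)) := by
    funext s
    rw [hρ, ← real_inner_self_eq_norm_sq]
  rw [hfun, HasDerivAt.deriv (f := fun s => m s * (2 * Real.pi * σ s ^ 2) ^ p *
      Real.exp (-⟪x - η s, x - η s⟫_ℝ / (2 * σ s ^ 2))) (hNd.mul hqd.exp)]
  -- spatial part
  set a : ℝ := σ' / σ t with hadef
  set C : ℝ := m t * (2 * Real.pi * σ t ^ 2) ^ p with hCdef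
  have hid : HasFDerivAt (fun y : EuclideanSpace ℝ (Fin d) => y - η t) (ContinuousLinearMap.id ℝ (EuclideanSpace ℝ (Fin d))) x :=
    (hasFDerivAt_id x).sub_const (η t)
  set L : EuclideanSpace ℝ (Fin d) →L[ℝ] ℝ := (fderivInnerCLM ℝ (v, v)).comp
      ((ContinuousLinearMap.id ℝ (EuclideanSpace ℝ (Fin d))).prod (ContinuousLinearMap.id ℝ (EuclideanSpace ℝ (Fin d)))) with hLdef
  have hIn : HasFDerivAt (fun y : EuclideanSpace ℝ (Fin d) => ⟪y - η t, y - η t⟫_ℝ) L x := by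
    rw [hLdef, hvdef]; exact hid.inner ℝ hid
  have hqs : HasFDerivAt (fun y : EuclideanSpace ℝ (Fin d) => -⟪y - η t, y - η t⟫_ℝ / (2 * σ t ^ 2))
      ((2 * σ t ^ 2)⁻¹ • (-L)) x := by
    have h2 := hIn.neg.const_mul (2 * σ t ^ 2)⁻¹
    simpa [div_eq_inv_mul] using h2
  have hCd : HasFDerivAt (fun y : EuclideanSpace ℝ (Fin d) => C * Real.exp (-⟪y - η t, y - η t⟫_ℝ / (2 * σ t ^ 2)))
      (C • (Real.exp (-⟪v, v⟫_ℝ / (2 * σ t ^ 2)) • ((2 * σ t ^ 2)⁻¹ • (-L)))) x := by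
    rw [hvdef]; exact hqs.exp.const_mul C
  have huD : HasFDerivAt (fun y : EuclideanSpace ℝ (Fin d) => a • (y - η t) + η')
      (a • ContinuousLinearMap.id ℝ (EuclideanSpace ℝ (Fin d))) x := (hid.const_smul a).add_const η'
  have hF := hCd.smul huD
  have hFeq : (fun y : EuclideanSpace ℝ (Fin d) => ρ t y • u t y)
      = fun y : EuclideanSpace ℝ (Fin d) => (C * Real.exp (-⟪y - η t, y - η t⟫_ℝ / (2 * σ t ^ 2)))
          • (a • (y - η t) + η') := by
    funext y
    rw [hρ, hu, ← real_inner_self_eq_norm_sq, hCdef, hpdef, hadef, hσ'def, hη'def]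
  simp only [spatialDiv]
  rw [hFeq, HasFDerivAt.fderiv (f := fun y : EuclideanSpace ℝ (Fin d) =>
      (C * Real.exp (-⟪y - η t, y - η t⟫_ℝ / (2 * σ t ^ 2))) • (a • (y - η t) + η')) hF]
  simp only [ContinuousLinearMap.add_apply, ContinuousLinearMap.smul_apply,
    ContinuousLinearMap.smulRight_apply, ContinuousLinearMap.comp_apply,
    ContinuousLinearMap.prod_apply, ContinuousLinearMap.id_apply,
    ContinuousLinearMap.neg_apply, fderivInnerCLM_apply, smul_eq_mul,
    PiLp.add_apply, PiLp.smul_apply,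
    EuclideanSpace.inner_single_left, EuclideanSpace.inner_single_right,
    conj_trivial, EuclideanSpace.single_apply, if_true, mul_one, one_mul, hLdef]
  rw [← hvdef]
  have hVV : ⟪v, v⟫_ℝ = ∑ k, v k * v k := by
    rw [PiLp.inner_apply]; exact Finset.sum_congr rfl fun k _ => by simp [RCLike.inner_apply, conj_trivial, mul_comm, sq]
  have hVI : ⟪v, η'⟫_ℝ = ∑ k, v k * η' k := by
    rw [PiLp.inner_apply]; exact Finset.sum_congr rfl fun k _ => by simp [RCLike.inner_apply, conj_trivial, mul_comm]
  rw [hρ, hg, ← real_inner_self_eq_norm_sq, ← hvdef]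
  rw [Finset.sum_add_distrib, Finset.sum_const, Finset.card_univ, Fintype.card_fin,
    nsmul_eq_mul]
  have hsum2 : (∑ k : Fin d, C * (Real.exp (-⟪v, v⟫_ℝ / (2 * σ t ^ 2))
          * ((2 * σ t ^ 2)⁻¹ * -(v k + v k))) * (a * v k + η' k))
      = (-2 * C * Real.exp (-⟪v, v⟫_ℝ / (2 * σ t ^ 2)) * (2 * σ t ^ 2)⁻¹ * a)
            * ∑ k, v k * v k
        + (-2 * C * Real.exp (-⟪v, v⟫_ℝ / (2 * σ t ^ 2)) * (2 * σ t ^ 2)⁻¹)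
            * ∑ k, v k * η' k := by
    rw [Finset.mul_sum, Finset.mul_sum, ← Finset.sum_add_distrib]
    exact Finset.sum_congr rfl fun k _ => by ring
  rw [hsum2, ← hVV, ← hVI, inner_neg_right, inner_neg_left, real_inner_comm η' v]
  have hBp1 : (2 * Real.pi * σ t ^ 2) ^ (p - 1)
      = (2 * Real.pi * σ t ^ 2) ^ p / (2 * Real.pi * σ t ^ 2) := by
    rw [Real.rpow_sub hBpos, Real.rpow_one]
  rw [hBp1, hCdef, hadef, hpdef, hσ'def, hm'def]
  field_simp
  ring
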